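/- Let $A : \mathbb{R} \times \mathbb{R} \to [0, \infty)$ be such that for each $x$, $u \mapsto A(x, u)$ is strictly decreasing on $(-\infty, u_M^-(x)]$, zero on $[u_M^-(x), u_M^+(x)]$, and strictly increasing on $[u_M^+(x), \infty)$. Suppose $u, v, \tilde{u}, \tilde{v} \in \mathbb{R}$ satisfy: $A(x, \tilde{v}) = A(y, v)$, $A(y, \tilde{u}) = A(x, u)$, $\mathrm{sgn}(u - u_M^{\pm}(x)) = \mathrm{sgn}(\tilde{u} - u_M^{\pm}(y))$ and $\mathrm{sgn}(v - u_M^{\pm}(y)) = \mathrm{sgn}(\tilde{v} - u_M^{\pm}(x))$ (branch preservation), where additionally $A(y,v) > 0$ and $A(x,u) > 0$. Then $(\mathrm{sgn}(v - \tilde{u}) + \mathrm{sgn}(u - \tilde{v}))(A(x, u) - A(y, v)) = 0$. -/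

import Mathlib

lemma sgn_transfer_pos {a b : ℝ} (h : Real.sign a = Real.sign b) (ha : 0 < a) : 0 < b := by
  rw [Real.sign_of_pos ha] at h
  by_contra hb
  push_neg at hb
  rcases hb.lt_or_eq with h1 | h1
  · rw [Real.sign_of_neg h1] at h; norm_num at h
  · rw [h1, Real.sign_zero] at h; norm_num at h

lemma sgn_transfer_neg {a b : ℝ} (h : Real.sign a = Real.sign b) (ha : a < 0) : b < 0 := by
  rw [Real.sign_of_neg ha] at h
  by_contra hb
  push_neg at hb
  rcases hb.lt_or_eq with h1 | h1
  · rw [Real.sign_of_pos h1] at h; norm_num at h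
  · rw [← h1, Real.sign_zero] at h; norm_num at h

theorem stmt16 (A : ℝ → ℝ → ℝ) (uMm uMp : ℝ → ℝ) (x y u v ut vt : ℝ)
    (hMM : ∀ z, uMm z ≤ uMp z)
    (hA0 : ∀ z w : ℝ, 0 ≤ A z w)
    (hAa : ∀ z : ℝ, StrictAntiOn (A z) (Set.Iic (uMm z)))
    (hAz : ∀ z : ℝ, ∀ w ∈ Set.Icc (uMm z) (uMp z), A z w = 0)
    (hAm : ∀ z : ℝ, StrictMonoOn (A z) (Set.Ici (uMp z)))
    (hvt : A x vt = A y v) (hut : A y ut = A x u)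
    (hsu1 : Real.sign (u - uMm x) = Real.sign (ut - uMm y))
    (hsu2 : Real.sign (u - uMp x) = Real.sign (ut - uMp y))
    (hsv1 : Real.sign (v - uMm y) = Real.sign (vt - uMm x))
    (hsv2 : Real.sign (v - uMp y) = Real.sign (vt - uMp x))
    (hApos1 : 0 < A y v) (hApos2 : 0 < A x u) :
    (Real.sign (v - ut) + Real.sign (u - vt)) * (A x u - A y v) = 0 := by
  have hu : u < uMm x ∨ uMp x < u := by
    by_contra h
    push_neg at h
    exact absurd (hAz x u ⟨h.1, h.2⟩) (by linarith)
  have hv : v < uMm y ∨ uMp y < v := by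
    by_contra h
    push_neg at h
    exact absurd (hAz y v ⟨h.1, h.2⟩) (by linarith)
  rcases hu with hu | hu
  · -- u on decreasing branch
    have hut' : ut < uMm y := by
      have := sgn_transfer_neg hsu1 (by linarith)
      linarith
    rcases hv with hv | hv
    · -- v on decreasing branch
      have hvt' : vt < uMm x := by
        have := sgn_transfer_neg hsv1 (by linarith)
        linarith
      rcases lt_trichotomy (A x u) (A y v) with h | h | h
      · have h1 : vt < u := by
          have := ((hAa x).lt_iff_gt (Set.mem_Iic.mpr hu.le) (Set.mem_Iic.mpr hvt'.le)).mp
            (by rw [hvt]; exact h)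
          exact this
        have h2 : v < ut := by
          have := ((hAa y).lt_iff_gt (Set.mem_Iic.mpr hut'.le) (Set.mem_Iic.mpr hv.le)).mp
            (by rw [hut]; exact h)
          exact this
        rw [Real.sign_of_neg (by linarith : v - ut < 0),
          Real.sign_of_pos (by linarith : (0:ℝ) < u - vt)]
        ring
      · rw [h]; ring
      · have h1 : u < vt := by
          have := ((hAa x).lt_iff_gt (Set.mem_Iic.mpr hvt'.le) (Set.mem_Iic.mpr hu.le)).mp
            (by rw [hvt]; exact h)
          exact this
        have h2 : ut < v := by
          have := ((hAa y).lt_iff_gt (Set.mem_Iic.mpr hv.le) (Set.mem_Iic.mpr hut'.le)).mp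
            (by rw [hut]; exact h)
          exact this
        rw [Real.sign_of_pos (by linarith : (0:ℝ) < v - ut),
          Real.sign_of_neg (by linarith : u - vt < 0)]
        ring
    · -- v on increasing branch
      have hvt' : uMp x < vt := by
        have := sgn_transfer_pos hsv2 (by linarith)
        linarith
      have hMx := hMM x
      have hMy := hMM y
      rw [Real.sign_of_pos (by linarith : (0:ℝ) < v - ut),
        Real.sign_of_neg (by linarith : u - vt < 0)]
      ring
  · -- u on increasing branch
    have hut' : uMp y < ut := by
      have := sgn_transfer_pos hsu2 (by linarith)
      linarith
    rcases hv with hv | hv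
    · -- v on decreasing branch
      have hvt' : vt < uMm x := by
        have := sgn_transfer_neg hsv1 (by linarith)
        linarith
      have hMx := hMM x
      have hMy := hMM y
      rw [Real.sign_of_neg (by linarith : v - ut < 0),
        Real.sign_of_pos (by linarith : (0:ℝ) < u - vt)]
      ring
    · -- v on increasing branch
      have hvt' : uMp x < vt := by
        have := sgn_transfer_pos hsv2 (by linarith)
        linarith
      rcases lt_trichotomy (A x u) (A y v) with h | h | h
      · have h1 : u < vt := by
          have := ((hAm x).lt_iff_lt (Set.mem_Ici.mpr hu.le) (Set.mem_Ici.mpr hvt'.le)).mp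
            (by rw [hvt]; exact h)
          exact this
        have h2 : ut < v := by
          have := ((hAm y).lt_iff_lt (Set.mem_Ici.mpr hut'.le) (Set.mem_Ici.mpr hv.le)).mp
            (by rw [hut]; exact h)
          exact this
        rw [Real.sign_of_pos (by linarith : (0:ℝ) < v - ut),
          Real.sign_of_neg (by linarith : u - vt < 0)]
        ring
      · rw [h]; ring
      · have h1 : vt < u := by
          have := ((hAm x).lt_iff_lt (Set.mem_Ici.mpr hvt'.le) (Set.mem_Ici.mpr hu.le)).mp
            (by rw [hvt]; exact h)
          exact this
        have h2 : v < ut := by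
          have := ((hAm y).lt_iff_lt (Set.mem_Ici.mpr hv.le) (Set.mem_Ici.mpr hut'.le)).mp
            (by rw [hut]; exact h)
          exact this
        rw [Real.sign_of_neg (by linarith : v - ut < 0),
          Real.sign_of_pos (by linarith : (0:ℝ) < u - vt)]
        ring
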